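/- An array L of n−1 integers is a valid LCP array for some terminated string over the binary alphabet {a,b} (plus terminator $) if and only if L, prefixed by one additional 0, has at most two zero entries in total and is a valid LCP array of a terminated string over an unbounded alphabet — equivalently: L is a yes-instance of BTSILA iff it has a leading zero and at most one other zero, and it is a yes-instance of TSILA. -/

import Mathlib

namespace SILA

/-- Length of the longest common prefix of two finite strings. -/
def listLcpLen : List ℕ → List ℕ → ℕ
  | a :: as, b :: bs => if a = b then listLcpLen as bs + 1 else 0
  | _, _ => 0

/-- `Y` is a terminated string over the alphabet `{1, 2, 3, …}` (of unbounded
size), with the terminator `$ = 0` occurring exactly at the last position. -/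
def IsTerminated (Y : List ℕ) : Prop :=
  Y ≠ [] ∧ ∀ (i : ℕ) (h : i < Y.length), Y.get ⟨i, h⟩ = 0 ↔ i = Y.length - 1

/-- `L[1..n)` is the LCP array of the terminated string `Y` of length `n`:
some permutation `ρ` sorts the (non-cyclic) suffixes of `Y` lexicographically,
and `L r` is the LCP length of the suffixes of ranks `r-1` and `r`. -/
def IsLCPofTerminated (n : ℕ) (L : ℕ → ℕ) (Y : List ℕ) : Prop :=
  Y.length = n ∧ IsTerminated Y ∧
  ∃ ρ : Equiv.Perm (Fin n),
    (∀ r r' : Fin n, r ≤ r' →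
      (Y.drop (ρ r).val = Y.drop (ρ r').val ∨
       List.Lex (· < ·) (Y.drop (ρ r).val) (Y.drop (ρ r').val))) ∧
    ∀ (r : ℕ) (h1 : 0 < r) (h2 : r < n),
      L r = listLcpLen (Y.drop (ρ ⟨r - 1, by omega⟩).val) (Y.drop (ρ ⟨r, h2⟩).val)

/-! ### Auxiliary lemmas -/

lemma lex_cons_le {x y : ℕ} {xs ys : List ℕ}
    (h : List.Lex (· < ·) (x :: xs) (y :: ys)) : x ≤ y := by
  cases h with
  | rel h => omega
  | cons h => exact le_rfl

lemma not_lex_singleton_zero {c : ℕ} {t : List ℕ} :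
    ¬ List.Lex (· < ·) (c :: t) [0] := by
  intro h
  cases h with
  | rel h => omega
  | cons h => cases h

lemma card_incr_le (n : ℕ) (g : ℕ → ℕ)
    (hg : ∀ r r', r ≤ r' → r' < n → g r ≤ g r') :
    ((Finset.Ico 1 n).filter (fun r => g (r - 1) < g r)).card ≤ g (n - 1) - g 0 := by
  induction n with
  | zero => simp
  | succ m ih =>
    rcases Nat.lt_or_ge m 1 with hm | hm
    · interval_cases m
      simp
    · have hins : Finset.Ico 1 (m + 1) = insert m (Finset.Ico 1 m) := by
        ext x; simp [Finset.mem_Ico]; omega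
      have h01 : g 0 ≤ g (m - 1) := hg 0 (m - 1) (by omega) (by omega)
      have h1m : g (m - 1) ≤ g m := hg (m - 1) m (by omega) (by omega)
      have ihm := ih (fun r r' h h' => hg r r' h (by omega))
      rw [hins, Finset.filter_insert]
      have hnm : m ∉ (Finset.Ico 1 m).filter (fun r => g (r - 1) < g r) := by
        simp [Finset.mem_filter]
      by_cases hc : g (m - 1) < g m
      · rw [if_pos hc, Finset.card_insert_of_notMem hnm]
        simp only [Nat.add_sub_cancel]
        omega
      · rw [if_neg hc]
        simp only [Nat.add_sub_cancel]
        omega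

lemma card_image_le (n : ℕ) (g : ℕ → ℕ)
    (hg : ∀ r r', r ≤ r' → r' < n → g r ≤ g r') :
    ((Finset.range n).image g).card ≤
      ((Finset.Ico 1 n).filter (fun r => g (r - 1) < g r)).card + 1 := by
  classical
  set Z := (Finset.Ico 1 n).filter (fun r => g (r - 1) < g r) with hZ
  have key : ∀ v ∈ (Finset.range n).image g,
      sInf {r | r < n ∧ g r = v} < n ∧ g (sInf {r | r < n ∧ g r = v}) = v := by
    intro v hv
    simp only [Finset.mem_image, Finset.mem_range] at hv
    obtain ⟨r0, hr0, hg0⟩ := hv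
    exact Nat.sInf_mem (⟨r0, hr0, hg0⟩ : {r | r < n ∧ g r = v}.Nonempty)
  have hmain := Finset.card_le_card_of_injOn (f := fun v => sInf {r | r < n ∧ g r = v})
    (s := (Finset.range n).image g) (t := insert 0 Z) ?_ ?_
  · calc ((Finset.range n).image g).card ≤ (insert 0 Z).card := hmain
      _ ≤ Z.card + 1 := Finset.card_insert_le _ _
  · intro v hv
    obtain ⟨hrn, hgr⟩ := key v hv
    show sInf {r | r < n ∧ g r = v} ∈ insert 0 Z
    set r := sInf {r | r < n ∧ g r = v} with hr
    rcases Nat.eq_zero_or_pos r with h0 | h0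
    · rw [h0]; exact Finset.mem_insert_self _ _
    · have hlt : g (r - 1) < g r := by
        have hle : g (r - 1) ≤ g r := hg _ _ (by omega) hrn
        rcases lt_or_eq_of_le hle with h | h
        · exact h
        · exfalso
          have hlt' : r - 1 < sInf {r | r < n ∧ g r = v} := by rw [← hr]; omega
          exact Nat.notMem_of_lt_sInf hlt' ⟨by omega, by rw [h, hgr]⟩
      refine Finset.mem_insert_of_mem ?_
      rw [hZ, Finset.mem_filter, Finset.mem_Ico]
      exact ⟨⟨h0, hrn⟩, by rw [hgr] at hlt ⊢; exact hlt⟩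
  · intro v1 h1 v2 h2 he
    have he' : sInf {r | r < n ∧ g r = v1} = sInf {r | r < n ∧ g r = v2} := he
    have e1 := (key v1 h1).2
    have e2 := (key v2 h2).2
    rw [← e1, ← e2, he']

lemma phi_inj {φ : ℕ → ℕ} {T : Finset ℕ} (hφ : ∀ a ∈ T, ∀ b ∈ T, a < b → φ a < φ b)
    {a b : ℕ} (ha : a ∈ T) (hb : b ∈ T) : φ a = φ b ↔ a = b := by
  constructor
  · intro h
    rcases lt_trichotomy a b with h' | h' | h'
    · have := hφ a ha b hb h'; omega
    · exact h'
    · have := hφ b hb a ha h'; omega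
  · rintro rfl; rfl

lemma lcp_map {φ : ℕ → ℕ} {T : Finset ℕ} (hφ : ∀ a ∈ T, ∀ b ∈ T, a < b → φ a < φ b) :
    ∀ (a b : List ℕ), (∀ x ∈ a, x ∈ T) → (∀ x ∈ b, x ∈ T) →
      listLcpLen (a.map φ) (b.map φ) = listLcpLen a b
  | [], b, _, _ => by cases b <;> simp [listLcpLen]
  | x :: xs, [], _, _ => by simp [listLcpLen]
  | x :: xs, y :: ys, ha, hb => by
    simp only [List.map_cons, listLcpLen]
    by_cases h : x = y
    · subst h
      rw [if_pos rfl, if_pos rfl,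
        lcp_map hφ xs ys (fun z hz => ha z (by simp [hz])) (fun z hz => hb z (by simp [hz]))]
    · rw [if_neg h,
        if_neg (fun hc => h ((phi_inj hφ (ha x (by simp)) (hb y (by simp))).1 hc))]

lemma lex_map {φ : ℕ → ℕ} {T : Finset ℕ} (hφ : ∀ a ∈ T, ∀ b ∈ T, a < b → φ a < φ b) :
    ∀ {a b : List ℕ}, List.Lex (· < ·) a b → (∀ x ∈ a, x ∈ T) → (∀ x ∈ b, x ∈ T) →
      List.Lex (· < ·) (a.map φ) (b.map φ) := by
  intro a b h
  induction h with
  | nil =>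
    intro _ _
    simp only [List.map_nil, List.map_cons]
    exact List.Lex.nil
  | @rel x l1 y l2 hxy =>
    intro ha hb
    simp only [List.map_cons]
    exact List.Lex.rel (hφ x (ha x (by simp)) y (hb y (by simp)) hxy)
  | @cons x l1 l2 h ih =>
    intro ha hb
    simp only [List.map_cons]
    exact List.Lex.cons (ih (fun z hz => ha z (by simp [hz])) (fun z hz => hb z (by simp [hz])))

/-- Head of the suffix of rank `r`. -/
def gfun (n : ℕ) (Y : List ℕ) (ρ : Equiv.Perm (Fin n)) (r : ℕ) : ℕ :=
  if h : r < n then Y.getD (ρ ⟨r, h⟩).val 0 else 0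

lemma g_mono {n : ℕ} {Y : List ℕ} {ρ : Equiv.Perm (Fin n)} (hlen : Y.length = n)
    (hsort : ∀ r r' : Fin n, r ≤ r' →
      (Y.drop (ρ r).val = Y.drop (ρ r').val ∨
       List.Lex (· < ·) (Y.drop (ρ r).val) (Y.drop (ρ r').val)))
    {r r' : ℕ} (hrr : r ≤ r') (hr' : r' < n) :
    gfun n Y ρ r ≤ gfun n Y ρ r' := by
  have hr : r < n := lt_of_le_of_lt hrr hr'
  rw [gfun, dif_pos hr, gfun, dif_pos hr']
  have hi : ((ρ ⟨r, hr⟩ : Fin n)).val < Y.length := by rw [hlen]; exact (ρ _).isLt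
  have hi' : ((ρ ⟨r', hr'⟩ : Fin n)).val < Y.length := by rw [hlen]; exact (ρ _).isLt
  have hs := hsort ⟨r, hr⟩ ⟨r', hr'⟩ (by simp [Fin.le_def, hrr])
  rw [List.drop_eq_getElem_cons hi, List.drop_eq_getElem_cons hi'] at hs
  rw [List.getD_eq_getElem _ _ hi, List.getD_eq_getElem _ _ hi']
  rcases hs with h | h
  · simp only [List.cons.injEq] at h
    exact le_of_eq h.1
  · exact lex_cons_le h

lemma L_zero_iff {n : ℕ} {Y : List ℕ} {ρ : Equiv.Perm (Fin n)} {L : ℕ → ℕ}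
    (hlen : Y.length = n)
    (hsort : ∀ r r' : Fin n, r ≤ r' →
      (Y.drop (ρ r).val = Y.drop (ρ r').val ∨
       List.Lex (· < ·) (Y.drop (ρ r).val) (Y.drop (ρ r').val)))
    (hL : ∀ (r : ℕ) (h1 : 0 < r) (h2 : r < n),
      L r = listLcpLen (Y.drop (ρ ⟨r - 1, by omega⟩).val) (Y.drop (ρ ⟨r, h2⟩).val))
    {r : ℕ} (h1 : 0 < r) (h2 : r < n) :
    (L r = 0 ↔ gfun n Y ρ (r - 1) < gfun n Y ρ r) := by
  have hr1 : r - 1 < n := by omega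
  have hle := g_mono hlen hsort (r := r - 1) (r' := r) (by omega) h2
  rw [hL r h1 h2]
  rw [gfun, dif_pos hr1, gfun, dif_pos h2] at hle ⊢
  have hi : ((ρ ⟨r - 1, hr1⟩ : Fin n)).val < Y.length := by rw [hlen]; exact (ρ _).isLt
  have hi' : ((ρ ⟨r, h2⟩ : Fin n)).val < Y.length := by rw [hlen]; exact (ρ _).isLt
  rw [List.drop_eq_getElem_cons hi, List.drop_eq_getElem_cons hi']
  rw [List.getD_eq_getElem _ _ hi, List.getD_eq_getElem _ _ hi'] at hle ⊢
  simp only [listLcpLen]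
  split_ifs with hc
  · exact ⟨fun h => h.elim, fun h => by omega⟩
  · constructor <;> intro h <;> omega

lemma rho_zero {n : ℕ} {Y : List ℕ} {ρ : Equiv.Perm (Fin n)} (hn : 2 ≤ n)
    (hlen : Y.length = n) (hterm : IsTerminated Y)
    (hsort : ∀ r r' : Fin n, r ≤ r' →
      (Y.drop (ρ r).val = Y.drop (ρ r').val ∨
       List.Lex (· < ·) (Y.drop (ρ r).val) (Y.drop (ρ r').val))) :
    (ρ (⟨0, by omega⟩ : Fin n)).val = n - 1 := by
  have hi0n : ((ρ (⟨0, by omega⟩ : Fin n)).val) < n := (ρ _).isLt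
  have h1 : n - 1 < Y.length := by omega
  have hlast : Y.drop (n - 1) = [0] := by
    rw [List.drop_eq_getElem_cons h1]
    have h3 : Y[n-1] = 0 := by
      have := (hterm.2 (n - 1) h1).2 (by omega)
      simpa [List.get_eq_getElem] using this
    have h4 : n - 1 + 1 = n := by omega
    rw [h3, h4, ← hlen, List.drop_length]
  have hle : (⟨0, by omega⟩ : Fin n) ≤ ρ.symm ⟨n - 1, by omega⟩ := by
    simp [Fin.le_def]
  have hs := hsort _ _ hle
  rw [Equiv.apply_symm_apply, hlast] at hs
  have hi0 : ((ρ (⟨0, by omega⟩ : Fin n)).val) < Y.length := by omega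
  rcases hs with h | h
  · have := congrArg List.length h
    simp [List.length_drop] at this
    omega
  · exfalso
    rw [List.drop_eq_getElem_cons hi0] at h
    exact not_lex_singleton_zero h

theorem BTSILA_iff_TSILA (n : ℕ) (hn : 2 ≤ n) (L : ℕ → ℕ) :
    (∃ Y : List ℕ, IsLCPofTerminated n L Y ∧ ∀ c ∈ Y, c ≤ 2) ↔
    (L 1 = 0 ∧ ((Finset.Ico 1 n).filter (fun r => L r = 0)).card ≤ 2 ∧
      ∃ Y : List ℕ, IsLCPofTerminated n L Y) := by
  constructor
  · rintro ⟨Y, ⟨hlen, hterm, ρ, hsort, hL⟩, hbin⟩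
    have hrz := rho_zero hn hlen hterm hsort
    have hg0 : gfun n Y ρ 0 = 0 := by
      rw [gfun, dif_pos (by omega : (0:ℕ) < n), hrz,
        List.getD_eq_getElem _ _ (by omega : n - 1 < Y.length)]
      have := (hterm.2 (n - 1) (by omega)).2 (by omega)
      simpa [List.get_eq_getElem] using this
    constructor
    · -- L 1 = 0
      rw [L_zero_iff hlen hsort hL one_pos (by omega : (1:ℕ) < n)]
      have h11 : (1:ℕ) - 1 = 0 := rfl
      rw [h11, hg0]
      rw [gfun, dif_pos (by omega : (1:ℕ) < n)]
      have hi' : ((ρ (⟨1, by omega⟩ : Fin n)).val) < Y.length := by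
        have := (ρ (⟨1, by omega⟩ : Fin n)).isLt; omega
      rw [List.getD_eq_getElem _ _ hi']
      rcases Nat.eq_zero_or_pos Y[(ρ (⟨1, by omega⟩ : Fin n)).val] with h0 | h0
      · exfalso
        have heq : ((ρ (⟨1, by omega⟩ : Fin n)).val) = n - 1 := by
          have := (hterm.2 _ hi').1 (by simpa [List.get_eq_getElem] using h0)
          omega
        have hfin : ρ (⟨1, by omega⟩ : Fin n) = ρ (⟨0, by omega⟩ : Fin n) :=
          Fin.ext (by rw [hrz, heq])
        have := ρ.injective hfin
        simp [Fin.ext_iff] at this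
      · exact h0
    constructor
    · -- card bound
      have hfe : (Finset.Ico 1 n).filter (fun r => L r = 0) =
          (Finset.Ico 1 n).filter (fun r => gfun n Y ρ (r - 1) < gfun n Y ρ r) := by
        apply Finset.filter_congr
        intro r hr
        rw [Finset.mem_Ico] at hr
        exact L_zero_iff hlen hsort hL hr.1 hr.2
      have hbound := card_incr_le n (gfun n Y ρ)
        (fun r r' h h' => g_mono hlen hsort h h')
      have hg2 : gfun n Y ρ (n - 1) ≤ 2 := by
        rw [gfun, dif_pos (by omega : n - 1 < n)]
        have hi : ((ρ (⟨n - 1, by omega⟩ : Fin n)).val) < Y.length := by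
          have := (ρ (⟨n - 1, by omega⟩ : Fin n)).isLt; omega
        rw [List.getD_eq_getElem _ _ hi]
        exact hbin _ (List.getElem_mem hi)
      rw [hfe]
      omega
    · exact ⟨Y, hlen, hterm, ρ, hsort, hL⟩
  · rintro ⟨hL1, hcard, Y, hlen, hterm, ρ, hsort, hL⟩
    classical
    set T := Y.toFinset with hT
    -- every symbol of Y is a head of some suffix
    have hTsub : T ⊆ (Finset.range n).image (gfun n Y ρ) := by
      intro c hc
      rw [hT, List.mem_toFinset] at hc
      obtain ⟨⟨i, hi⟩, hci⟩ := List.mem_iff_get.1 hc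
      have hin : i < n := by omega
      refine Finset.mem_image.2 ⟨(ρ.symm ⟨i, hin⟩).val,
        Finset.mem_range.2 (ρ.symm _).isLt, ?_⟩
      rw [gfun, dif_pos (ρ.symm ⟨i, hin⟩).isLt]
      have he : (⟨(ρ.symm ⟨i, hin⟩).val, (ρ.symm ⟨i, hin⟩).isLt⟩ : Fin n)
          = ρ.symm ⟨i, hin⟩ := rfl
      rw [he, Equiv.apply_symm_apply]
      rw [List.getD_eq_getElem _ _ (by omega : i < Y.length)]
      simpa [List.get_eq_getElem] using hci
    have hfe : (Finset.Ico 1 n).filter (fun r => L r = 0) =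
        (Finset.Ico 1 n).filter (fun r => gfun n Y ρ (r - 1) < gfun n Y ρ r) := by
      apply Finset.filter_congr
      intro r hr
      rw [Finset.mem_Ico] at hr
      exact L_zero_iff hlen hsort hL hr.1 hr.2
    have hT3 : T.card ≤ 3 := by
      have h1 := Finset.card_le_card hTsub
      have h2 := card_image_le n (gfun n Y ρ) (fun r r' h h' => g_mono hlen hsort h h')
      rw [← hfe] at h2
      omega
    have h0T : (0 : ℕ) ∈ T := by
      rw [hT, List.mem_toFinset]
      have hlast : Y.get ⟨n - 1, by omega⟩ = 0 := (hterm.2 (n - 1) (by omega)).2 (by omega)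
      rw [← hlast]
      exact List.get_mem _ _
    set φ : ℕ → ℕ := fun c => (T.filter (· < c)).card with hφdef
    have hφ : ∀ a ∈ T, ∀ b ∈ T, a < b → φ a < φ b := by
      intro a ha b hb hab
      apply Finset.card_lt_card
      constructor
      · intro x hx
        rw [Finset.mem_filter] at hx ⊢
        exact ⟨hx.1, by have := hx.2; omega⟩
      · intro hsub
        have : a ∈ T.filter (· < b) := Finset.mem_filter.2 ⟨ha, by simpa using hab⟩
        have := hsub this
        rw [Finset.mem_filter] at this
        simp at this
      
    have hφ2 : ∀ c ∈ T, φ c ≤ 2 := by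
      intro c hc
      have hsub : T.filter (· < c) ⊆ T.erase c := by
        intro x hx
        rw [Finset.mem_filter] at hx
        refine Finset.mem_erase.2 ⟨?_, hx.1⟩
        have := hx.2; omega
      have := Finset.card_le_card hsub
      rw [Finset.card_erase_of_mem hc] at this
      have hφc : φ c = (T.filter (· < c)).card := rfl
      omega
    have hφ0 : ∀ c ∈ T, (φ c = 0 ↔ c = 0) := by
      intro c hc
      constructor
      · intro h
        by_contra hcne
        have : (0 : ℕ) ∈ T.filter (· < c) :=
          Finset.mem_filter.2 ⟨h0T, by simpa using Nat.pos_of_ne_zero hcne⟩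
        have := Finset.card_pos.2 ⟨0, this⟩
        have hφc : φ c = (T.filter (· < c)).card := rfl
        omega
      · rintro rfl
        rw [hφdef]
        simp only
        rw [Finset.card_eq_zero, Finset.filter_eq_empty_iff]
        intro x _
        simp
    have hmemT : ∀ i, ∀ x ∈ Y.drop i, x ∈ T := by
      intro i x hx
      rw [hT, List.mem_toFinset]
      exact List.mem_of_mem_drop hx
    refine ⟨Y.map φ, ⟨by simpa using hlen, ?_, ρ, ?_, ?_⟩, ?_⟩
    · -- IsTerminated
      constructor
      · simp [hterm.1]
      · intro i h
        have hiY : i < Y.length := by simpa using h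
        have hmap : (Y.map φ).get ⟨i, h⟩ = φ (Y.get ⟨i, hiY⟩) := by
          simp [List.get_eq_getElem]
        rw [hmap]
        have hYT : Y.get ⟨i, hiY⟩ ∈ T := by
          rw [hT, List.mem_toFinset]; exact List.get_mem _ _
        rw [hφ0 _ hYT]
        rw [hterm.2 i hiY]
        simp
    · -- sortedness
      intro r r' hrr
      have hs := hsort r r' hrr
      rw [← List.map_drop, ← List.map_drop]
      rcases hs with h | h
      · left; rw [h]
      · right; exact lex_map hφ h (hmemT _) (hmemT _)
    · -- LCP values
      intro r h1 h2
      rw [← List.map_drop, ← List.map_drop,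
        lcp_map hφ _ _ (hmemT _) (hmemT _)]
      exact hL r h1 h2
    · -- binary
      intro c hc
      rw [List.mem_map] at hc
      obtain ⟨x, hx, rfl⟩ := hc
      exact hφ2 x (by rw [hT, List.mem_toFinset]; exact hx)

end SILA
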